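/- Let x : ℝ → ℝ^n be a continuous curve, W : ℝ^n → ℝ, N1, N2 : ℝ^n → ℝ continuous nonnegative functions, γ > 0, and let E := { y ∈ ℝ^n : N1(y) = 0 and N2(y) = 0 } be nonempty. Suppose for every t ≥ 0 the map t ↦ W(x(t)) is differentiable with (d/dt)W(x(t)) ≤ -γ·(N1(x(t)) + N2(x(t))), W(x(t)) ≥ 0 for all t ≥ 0, there exist T_U ≥ 0 and c > 0 such that N1(x(t)) + N2(x(t)) ≥ c·dist(x(t), E)² for all t ≥ T_U, and t ↦ dist(x(t), E) is uniformly continuous on [0,∞). Let W∞ := lim_{t→∞} W(x(t)) and K := sqrt((W(x(0)) - W∞)/(γ·c)). Then for every ε > 0 there exists Δ > 0 such that for every T ≥ T_U with T > 0 there exists τ ∈ [T, 2T] with dist(x(s), E) ≤ K/√T + ε for all s ∈ [τ, τ + Δ]. -/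

import Mathlib

open Filter MeasureTheory

theorem stmt_11 {n : ℕ} (x : ℝ → EuclideanSpace ℝ (Fin n)) (hx : Continuous x)
    (W N1 N2 : EuclideanSpace ℝ (Fin n) → ℝ)
    (hN1c : Continuous N1) (hN2c : Continuous N2)
    (hN1 : ∀ y, 0 ≤ N1 y) (hN2 : ∀ y, 0 ≤ N2 y)
    (γ : ℝ) (hγ : 0 < γ)
    (E : Set (EuclideanSpace ℝ (Fin n)))
    (hE : E = {y | N1 y = 0 ∧ N2 y = 0})
    (hEne : E.Nonempty)
    (w' : ℝ → ℝ)
    (hd : ∀ t, 0 ≤ t → HasDerivAt (fun s => W (x s)) (w' t) t)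
    (hineq : ∀ t, 0 ≤ t → w' t ≤ -γ * (N1 (x t) + N2 (x t)))
    (hWnn : ∀ t, 0 ≤ t → 0 ≤ W (x t))
    (TU : ℝ) (hTU : 0 ≤ TU) (c : ℝ) (hc : 0 < c)
    (heb : ∀ t, TU ≤ t → c * Metric.infDist (x t) E ^ 2 ≤ N1 (x t) + N2 (x t))
    (hu : UniformContinuousOn (fun t => Metric.infDist (x t) E) (Set.Ici 0))
    (Winf : ℝ)
    (hWinf : Tendsto (fun t => W (x t)) atTop (nhds Winf))
    (K : ℝ) (hK : K = Real.sqrt ((W (x 0) - Winf) / (γ * c))) :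
    ∀ ε : ℝ, 0 < ε → ∃ Δ : ℝ, 0 < Δ ∧
      ∀ T : ℝ, TU ≤ T → 0 < T →
        ∃ τ ∈ Set.Icc T (2 * T),
          ∀ s ∈ Set.Icc τ (τ + Δ),
            Metric.infDist (x s) E ≤ K / Real.sqrt T + ε := by
  set f : ℝ → ℝ := fun t => W (x t) with hf
  set d : ℝ → ℝ := fun t => Metric.infDist (x t) E with hdd
  have hdc : Continuous d := (Metric.continuous_infDist_pt E).comp hx
  have hdnn : ∀ t, 0 ≤ d t := fun t => Metric.infDist_nonneg
  -- f is antitone on [0, ∞)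
  have hanti : AntitoneOn f (Set.Ici (0:ℝ)) := by
    apply antitoneOn_of_deriv_nonpos (convex_Ici 0)
    · exact fun t ht => ((hd t ht).continuousAt).continuousWithinAt
    · intro t ht
      rw [interior_Ici] at ht
      exact ((hd t ht.le).differentiableAt).differentiableWithinAt
    · intro t ht
      rw [interior_Ici] at ht
      rw [(hd t ht.le).deriv]
      have h1 := hineq t ht.le
      nlinarith [hN1 (x t), hN2 (x t)]
  have hWinf_le : ∀ t, 0 ≤ t → Winf ≤ f t := by
    intro t ht
    refine le_of_tendsto hWinf ?_
    filter_upwards [eventually_ge_atTop t] with s hs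
    exact hanti ht (ht.trans hs) hs
  have hKnn : 0 ≤ K := hK ▸ Real.sqrt_nonneg _
  have hK2 : γ * c * K ^ 2 = f 0 - Winf := by
    have h0 : 0 ≤ (f 0 - Winf) / (γ * c) := by
      have h1 := hWinf_le 0 le_rfl
      exact div_nonneg (by linarith) (by positivity)
    rw [hK, Real.sq_sqrt h0]
    field_simp
  intro ε hε
  rw [Metric.uniformContinuousOn_iff] at hu
  obtain ⟨δ, hδ, hδ'⟩ := hu ε hε
  refine ⟨δ / 2, by linarith, ?_⟩
  intro T hT hT0
  have hsT : 0 < Real.sqrt T := Real.sqrt_pos.mpr hT0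
  -- key claim: some point in [T, 2T] is close
  have hkey : ∃ τ ∈ Set.Icc T (2 * T), d τ ≤ K / Real.sqrt T := by
    by_contra hcon
    push_neg at hcon
    obtain ⟨τ0, hτ0, hmin⟩ := isCompact_Icc.exists_isMinOn
      (Set.nonempty_Icc.mpr (by linarith)) (hdc.continuousOn (s := Set.Icc T (2*T)))
    set m := d τ0 with hm
    have hmgt : K / Real.sqrt T < m := hcon τ0 hτ0
    have hmnn : 0 ≤ m := hdnn τ0
    -- g is antitone on [T, 2T]
    have hg : AntitoneOn (fun t => f t + γ * c * m ^ 2 * t) (Set.Icc T (2 * T)) := by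
      apply antitoneOn_of_deriv_nonpos (convex_Icc _ _)
      · intro t ht
        exact (((hd t (by linarith [ht.1])).continuousAt).continuousWithinAt).add
          (Continuous.continuousWithinAt (continuous_const.mul continuous_id))
      · intro t ht
        rw [interior_Icc] at ht
        have ht0 : (0:ℝ) ≤ t := by linarith [ht.1]
        have hder : HasDerivAt (fun t => f t + γ * c * m ^ 2 * t)
            (w' t + γ * c * m ^ 2) t := by
          have := (hd t ht0).add ((hasDerivAt_id t).const_mul (γ * c * m ^ 2)); simp only [mul_one] at this; exact this
        exact hder.differentiableAt.differentiableWithinAt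
      · intro t ht
        rw [interior_Icc] at ht
        have ht0 : (0:ℝ) ≤ t := by linarith [ht.1]
        have hder : HasDerivAt (fun t => f t + γ * c * m ^ 2 * t)
            (w' t + γ * c * m ^ 2) t := by
          have := (hd t ht0).add ((hasDerivAt_id t).const_mul (γ * c * m ^ 2)); simp only [mul_one] at this; exact this
        rw [hder.deriv]
        have h1 := hineq t ht0
        have h2 := heb t (by linarith [ht.1])
        have h3 : m ≤ Metric.infDist (x t) E := hmin (Set.mem_Icc.mpr ⟨ht.1.le, ht.2.le⟩)
        have h4 : m ^ 2 ≤ Metric.infDist (x t) E ^ 2 := pow_le_pow_left₀ hmnn h3 2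
        nlinarith [mul_le_mul_of_nonneg_left h2 hγ.le,
          mul_le_mul_of_nonneg_left h4 (mul_pos hγ hc).le]
    have hmem1 : T ∈ Set.Icc T (2 * T) := Set.mem_Icc.mpr ⟨le_rfl, by linarith⟩
    have hmem2 : 2 * T ∈ Set.Icc T (2 * T) := Set.mem_Icc.mpr ⟨by linarith, le_rfl⟩
    have hdec := hg hmem1 hmem2 (by linarith)
    have hfT : f T ≤ f 0 := hanti (Set.mem_Ici.mpr le_rfl) (Set.mem_Ici.mpr hT0.le) hT0.le
    have hW2T : Winf ≤ f (2 * T) := hWinf_le (2 * T) (by linarith)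
    have h5 : K < m * Real.sqrt T := (div_lt_iff₀ hsT).mp hmgt
    have h6 : K ^ 2 < m ^ 2 * T := by
      nlinarith [Real.sq_sqrt hT0.le, hKnn]
    have hdec' : f (2 * T) + γ * c * m ^ 2 * (2 * T) ≤ f T + γ * c * m ^ 2 * T := hdec
    nlinarith [mul_lt_mul_of_pos_left h6 (mul_pos hγ hc)]
  obtain ⟨τ, hτmem, hτ⟩ := hkey
  refine ⟨τ, hτmem, ?_⟩
  intro s hs
  have hτ0 : 0 ≤ τ := by linarith [hτmem.1]
  have hs0 : 0 ≤ s := by linarith [hs.1]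
  have hdist : dist s τ < δ := by
    rw [Real.dist_eq, abs_of_nonneg (by linarith [hs.1])]
    linarith [hs.2]
  have := hδ' s hs0 τ hτ0 hdist
  rw [Real.dist_eq] at this
  have : d s - d τ < ε := lt_of_le_of_lt (le_abs_self _) this
  linarith
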